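/- Let (B_ℓ)_{ℓ∈ℕ} be a partition of ℕ, let M : ℕ × ℕ → ℝ, and let C > 0, 0 < q < 1, ε > 0 and r ∈ ℕ be such that: (i) |M_{ij}| ≤ C q^{(1/2+ε)|ℓ−k|} whenever i ∈ B_ℓ and j ∈ B_k; (ii) for all ℓ, k ∈ ℕ and every i ∈ B_ℓ, the cardinality of {j ∈ B_k : M_{ij} ≠ 0} is at most C q^{min{k,ℓ}−k}; (iii) for all ℓ, k ∈ ℕ and every j ∈ B_k, the cardinality of {i ∈ B_ℓ : M_{ij} ≠ 0} is at most C q^{min{k,ℓ}−ℓ}; (iv) M_{ij} = 0 whenever i ∈ B_ℓ, j ∈ B_k with |ℓ−k| ≤ r. Then M induces a bounded operator on ℓ² with ‖M‖₂ ≤ C_geo q^{ε r}, where the constant C_geo > 0 depends only on C, q and ε. -/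

import Mathlib

abbrev Mat := ℕ → ℕ → ℝ

noncomputable def mulVec (M : Mat) (x : ℕ → ℝ) : ℕ → ℝ := fun i => ∑' j, M i j * x j

def Memℓ2 (x : ℕ → ℝ) : Prop := Summable fun i => x i ^ 2

noncomputable def l2norm (x : ℕ → ℝ) : ℝ := Real.sqrt (∑' i, x i ^ 2)

def BoundedWith (M : Mat) (K : ℝ) : Prop :=
  ∀ x : ℕ → ℝ, Memℓ2 x →
    (∀ i, Summable fun j => |M i j * x j|) ∧ Memℓ2 (mulVec M x) ∧
      l2norm (mulVec M x) ≤ K * l2norm x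


lemma geo_sum_image {t : ℝ} (ht0 : 0 ≤ t) (ht1 : t < 1) (E : Finset ℕ) (r : ℕ)
    (hE : ∀ m ∈ E, r < m) : ∑ m ∈ E, t ^ m ≤ t ^ (r + 1) / (1 - t) := by
  have h1t : 0 < 1 - t := by linarith
  have key : ∑ m ∈ E, t ^ m = t ^ (r+1) * ∑ m ∈ E, t ^ (m - (r+1)) := by
    rw [Finset.mul_sum]
    refine Finset.sum_congr rfl fun m hm => ?_
    rw [← pow_add]
    congr 1
    have := hE m hm
    omega
  rw [key]
  have hinj : Set.InjOn (fun m => m - (r+1)) E := by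
    intro a ha b hb hab
    have := hE a ha; have := hE b hb
    simp only at hab
    omega
  have h2 : ∑ m ∈ E, t ^ (m - (r+1)) = ∑ d ∈ E.image (fun m => m - (r+1)), t ^ d := by
    rw [Finset.sum_image]
    intro a ha b hb hab
    exact hinj ha hb hab
  rw [h2]
  have h3 : ∑ d ∈ E.image (fun m => m - (r+1)), t ^ d ≤ ∑' d : ℕ, t ^ d :=
    Summable.sum_le_tsum _ (fun i _ => pow_nonneg ht0 i) (summable_geometric_of_lt_one ht0 ht1)
  rw [tsum_geometric_of_lt_one ht0 ht1] at h3
  calc t^(r+1) * ∑ d ∈ E.image (fun m => m - (r+1)), t ^ d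
      ≤ t^(r+1) * (1-t)⁻¹ := by
        exact mul_le_mul_of_nonneg_left h3 (pow_nonneg ht0 _)
    _ = t^(r+1) / (1-t) := by rw [div_eq_mul_inv]

lemma geo_filtered {t : ℝ} (ht0 : 0 ≤ t) (ht1 : t < 1) (K : Finset ℕ) (e : ℕ → ℕ)
    (he : Set.InjOn e K) (r : ℕ) :
    ∑ k ∈ K, (if r < e k then t ^ e k else 0) ≤ t ^ (r + 1) / (1 - t) := by
  rw [← Finset.sum_filter]
  have : ∑ k ∈ K.filter (fun k => r < e k), t ^ e k
      = ∑ m ∈ (K.filter (fun k => r < e k)).image e, t ^ m := by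
    rw [Finset.sum_image]
    intro a ha b hb hab
    exact he (Finset.mem_of_mem_filter a ha) (Finset.mem_of_mem_filter b hb) hab
  rw [this]
  refine geo_sum_image ht0 ht1 _ _ fun m hm => ?_
  obtain ⟨k, hk, rfl⟩ := Finset.mem_image.mp hm
  exact (Finset.mem_filter.mp hk).2

lemma geo_abs_sum {t : ℝ} (ht0 : 0 ≤ t) (ht1 : t < 1) (K : Finset ℕ) (ℓ r : ℕ) :
    ∑ k ∈ K, (if r < ((ℓ : ℤ) - (k : ℤ)).natAbs then t ^ ((ℓ : ℤ) - (k : ℤ)).natAbs else 0)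
      ≤ 2 * t ^ (r + 1) / (1 - t) := by
  have h1t : 0 < 1 - t := by linarith
  classical
  have hsplit : K = K.filter (fun k => k ≤ ℓ) ∪ K.filter (fun k => ¬ k ≤ ℓ) :=
    (Finset.filter_union_filter_not_eq _ K).symm
  rw [hsplit, Finset.sum_union (Finset.disjoint_filter_filter_not K K _)]
  have h1 : ∑ k ∈ K.filter (fun k => k ≤ ℓ),
      (if r < ((ℓ : ℤ) - (k : ℤ)).natAbs then t ^ ((ℓ : ℤ) - (k : ℤ)).natAbs else 0)
      ≤ t ^ (r+1) / (1-t) := by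
    have hcong : ∀ k ∈ K.filter (fun k => k ≤ ℓ),
        (if r < ((ℓ : ℤ) - (k : ℤ)).natAbs then t ^ ((ℓ : ℤ) - (k : ℤ)).natAbs else 0)
        = (if r < ℓ - k then t ^ (ℓ - k) else 0) := by
      intro k hk
      have hk' := (Finset.mem_filter.mp hk).2
      have : ((ℓ : ℤ) - (k : ℤ)).natAbs = ℓ - k := by omega
      rw [this]
    rw [Finset.sum_congr rfl hcong]
    refine geo_filtered ht0 ht1 _ (fun k => ℓ - k) ?_ r
    intro a ha b hb hab
    have := (Finset.mem_filter.mp ha).2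
    have := (Finset.mem_filter.mp hb).2
    simp only at hab
    omega
  have h2 : ∑ k ∈ K.filter (fun k => ¬ k ≤ ℓ),
      (if r < ((ℓ : ℤ) - (k : ℤ)).natAbs then t ^ ((ℓ : ℤ) - (k : ℤ)).natAbs else 0)
      ≤ t ^ (r+1) / (1-t) := by
    have hcong : ∀ k ∈ K.filter (fun k => ¬ k ≤ ℓ),
        (if r < ((ℓ : ℤ) - (k : ℤ)).natAbs then t ^ ((ℓ : ℤ) - (k : ℤ)).natAbs else 0)
        = (if r < k - ℓ then t ^ (k - ℓ) else 0) := by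
      intro k hk
      have hk' := (Finset.mem_filter.mp hk).2
      have : ((ℓ : ℤ) - (k : ℤ)).natAbs = k - ℓ := by omega
      rw [this]
    rw [Finset.sum_congr rfl hcong]
    refine geo_filtered ht0 ht1 _ (fun k => k - ℓ) ?_ r
    intro a ha b hb hab
    have := (Finset.mem_filter.mp ha).2
    have := (Finset.mem_filter.mp hb).2
    have hab' : a - ℓ = b - ℓ := hab
    omega
  rw [mul_div_assoc]
  linarith

lemma tsum_cs (a b : ℕ → ℝ) (ha0 : ∀ j, 0 ≤ a j) (hb0 : ∀ j, 0 ≤ b j)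
    (ha : Summable (fun j => a j ^ 2)) (hb : Summable fun j => b j ^ 2) :
    Summable (fun j => a j * b j) ∧
      (∑' j, a j * b j) ^ 2 ≤ (∑' j, a j ^ 2) * (∑' j, b j ^ 2) := by
  have hsum : Summable (fun j => a j * b j) := by
    refine Summable.of_nonneg_of_le (fun j => mul_nonneg (ha0 j) (hb0 j))
      (fun j => ?_) ((ha.add hb).div_const 2)
    have := sq_nonneg (a j - b j)
    show a j * b j ≤ (a j ^ 2 + b j ^ 2) / 2
    nlinarith
  refine ⟨hsum, ?_⟩
  have hA : 0 ≤ ∑' j, a j ^ 2 := tsum_nonneg fun j => sq_nonneg _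
  have hB : 0 ≤ ∑' j, b j ^ 2 := tsum_nonneg fun j => sq_nonneg _
  have hle : ∑' j, a j * b j ≤ Real.sqrt ((∑' j, a j ^ 2) * (∑' j, b j ^ 2)) := by
    refine Summable.tsum_le_of_sum_le hsum fun s => ?_
    have h1 : (∑ j ∈ s, a j * b j) ^ 2 ≤ (∑ j ∈ s, a j ^ 2) * ∑ j ∈ s, b j ^ 2 :=
      Finset.sum_mul_sq_le_sq_mul_sq s a b
    have h2 : (∑ j ∈ s, a j ^ 2) * ∑ j ∈ s, b j ^ 2 ≤ (∑' j, a j ^ 2) * (∑' j, b j ^ 2) := by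
      refine mul_le_mul (Summable.sum_le_tsum s (fun i _ => sq_nonneg _) ha)
        (Summable.sum_le_tsum s (fun i _ => sq_nonneg _) hb)
        (Finset.sum_nonneg fun i _ => sq_nonneg _) hA
    have h3 : 0 ≤ ∑ j ∈ s, a j * b j :=
      Finset.sum_nonneg fun j _ => mul_nonneg (ha0 j) (hb0 j)
    have := Real.sqrt_le_sqrt (le_trans h1 h2)
    rwa [Real.sqrt_sq h3] at this
  have h0 : 0 ≤ ∑' j, a j * b j := tsum_nonneg fun j => mul_nonneg (ha0 j) (hb0 j)
  calc (∑' j, a j * b j) ^ 2 ≤ (Real.sqrt ((∑' j, a j ^ 2) * (∑' j, b j ^ 2))) ^ 2 := by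
        exact pow_le_pow_left₀ h0 hle 2
    _ = (∑' j, a j ^ 2) * (∑' j, b j ^ 2) := Real.sq_sqrt (mul_nonneg hA hB)


lemma exponent_identity (q ε : ℝ) (hq0 : 0 < q) (ℓ k : ℕ) :
    q ^ (((min k ℓ : ℕ) : ℝ) - (k : ℝ)) * (q ^ ((1 / 2 + ε) * |(ℓ : ℝ) - (k : ℝ)|) * q ^ ((k : ℝ) / 2))
      = q ^ ((ℓ : ℝ) / 2) * (q ^ ε) ^ (((ℓ : ℤ) - (k : ℤ)).natAbs) := by
  have h1 : (q ^ ε) ^ (((ℓ : ℤ) - (k : ℤ)).natAbs) = q ^ (ε * ((((ℓ : ℤ) - (k : ℤ)).natAbs : ℕ) : ℝ)) := by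
    rw [← Real.rpow_natCast (q ^ ε), ← Real.rpow_mul hq0.le]
  rw [h1, ← Real.rpow_add hq0, ← Real.rpow_add hq0, ← Real.rpow_add hq0]
  congr 1
  have habs : |(ℓ : ℝ) - (k : ℝ)| = ((((ℓ : ℤ) - (k : ℤ)).natAbs : ℕ) : ℝ) := by
    rw [Nat.cast_natAbs]
    push_cast
    ring_nf
  rw [habs]
  rcases le_total k ℓ with h | h
  · have h2 : min k ℓ = k := min_eq_left h
    have h3 : ((((ℓ : ℤ) - (k : ℤ)).natAbs : ℕ) : ℝ) = (ℓ : ℝ) - (k : ℝ) := by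
      have : ((ℓ : ℤ) - (k : ℤ)).natAbs = ℓ - k := by omega
      rw [this]; push_cast [h]; ring
    rw [h2, h3]; push_cast; ring
  · have h2 : min k ℓ = ℓ := min_eq_right h
    have h3 : ((((ℓ : ℤ) - (k : ℤ)).natAbs : ℕ) : ℝ) = (k : ℝ) - (ℓ : ℝ) := by
      have : ((ℓ : ℤ) - (k : ℤ)).natAbs = k - ℓ := by omega
      rw [this]; push_cast [h]; ring
    rw [h2, h3]; push_cast; ring

lemma row_bound (C q ε : ℝ) (hC : 0 < C) (hq0 : 0 < q) (hq1 : q < 1) (hε : 0 < ε)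
    (B : ℕ → Set ℕ) (M : Mat) (r : ℕ)
    (blk : ℕ → ℕ) (hblk : ∀ n, n ∈ B (blk n))
    (hdecay : ∀ ℓ k i j, i ∈ B ℓ → j ∈ B k →
      |M i j| ≤ C * q ^ ((1 / 2 + ε) * |(ℓ : ℝ) - (k : ℝ)|))
    (hrow : ∀ ℓ k i, i ∈ B ℓ →
      (B k ∩ {j | M i j ≠ 0}).Finite ∧
      ((B k ∩ {j | M i j ≠ 0}).ncard : ℝ) ≤ C * q ^ (((min k ℓ : ℕ) : ℝ) - (k : ℝ)))
    (hvan : ∀ ℓ k i j, i ∈ B ℓ → j ∈ B k → |(ℓ : ℤ) - (k : ℤ)| ≤ (r : ℤ) → M i j = 0)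
    (i : ℕ) (F : Finset ℕ) :
    ∑ j ∈ F, |M i j| * q ^ ((blk j : ℝ) / 2)
      ≤ (2 * C ^ 2 * (q ^ ε) ^ (r + 1) / (1 - q ^ ε)) * q ^ ((blk i : ℝ) / 2) := by
  classical
  set ℓ := blk i with hℓ
  have hi : i ∈ B ℓ := hblk i
  set t := q ^ ε with ht
  have ht0 : 0 < t := Real.rpow_pos_of_pos hq0 ε
  have ht1 : t < 1 := Real.rpow_lt_one hq0.le hq1 hε
  set f : ℕ → ℝ := fun j => |M i j| * q ^ ((blk j : ℝ) / 2) with hf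
  have hf0 : ∀ j, 0 ≤ f j := fun j =>
    mul_nonneg (abs_nonneg _) (Real.rpow_pos_of_pos hq0 _).le
  set F' := F.filter (fun j => M i j ≠ 0) with hF'
  have step0 : ∑ j ∈ F, f j = ∑ j ∈ F', f j := by
    rw [hF', Finset.sum_filter_of_ne]
    intro j _ hfj
    intro h0
    apply hfj
    rw [hf]; simp [h0]
  set d : ℕ → ℕ := fun k => ((ℓ : ℤ) - (k : ℤ)).natAbs with hd
  have step1 : ∑ j ∈ F', f j
      = ∑ k ∈ F'.image blk, ∑ j ∈ F'.filter (fun j => blk j = k), f j :=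
    (Finset.sum_fiberwise_of_maps_to (fun j hj => Finset.mem_image_of_mem blk hj) f).symm
  have step2 : ∀ k ∈ F'.image blk,
      ∑ j ∈ F'.filter (fun j => blk j = k), f j
        ≤ C ^ 2 * q ^ ((ℓ : ℝ) / 2) * (if r < d k then t ^ (d k) else 0) := by
    intro k _
    by_cases hdk : r < d k
    · rw [if_pos hdk]
      set E := C * q ^ ((1 / 2 + ε) * |(ℓ : ℝ) - (k : ℝ)|) * q ^ ((k : ℝ) / 2) with hE
      have hE0 : 0 ≤ E :=
        mul_nonneg (mul_nonneg hC.le (Real.rpow_pos_of_pos hq0 _).le)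
          (Real.rpow_pos_of_pos hq0 _).le
      have hterm : ∀ j ∈ F'.filter (fun j => blk j = k), f j ≤ E := by
        intro j hj
        obtain ⟨hj1, hj2⟩ := Finset.mem_filter.mp hj
        have hjk : j ∈ B k := hj2 ▸ hblk j
        rw [hf, hE]
        simp only []
        rw [hj2]
        exact mul_le_mul_of_nonneg_right (hdecay ℓ k i j hi hjk)
          (Real.rpow_pos_of_pos hq0 _).le
      have hsub : (↑(F'.filter (fun j => blk j = k)) : Set ℕ) ⊆ B k ∩ {j | M i j ≠ 0} := by
        intro j hj
        simp only [Finset.coe_filter, Set.mem_setOf_eq] at hj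
        obtain ⟨hj1, hj2⟩ := hj
        exact ⟨hj2 ▸ hblk j, (Finset.mem_filter.mp hj1).2⟩
      have hcard : ((F'.filter (fun j => blk j = k)).card : ℝ)
          ≤ C * q ^ (((min k ℓ : ℕ) : ℝ) - (k : ℝ)) := by
        have h1 := Set.ncard_le_ncard hsub (hrow ℓ k i hi).1
        rw [Set.ncard_coe_finset] at h1
        calc ((F'.filter (fun j => blk j = k)).card : ℝ) ≤ ((B k ∩ {j | M i j ≠ 0}).ncard : ℝ) := by
              exact_mod_cast h1
          _ ≤ _ := (hrow ℓ k i hi).2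
      calc ∑ j ∈ F'.filter (fun j => blk j = k), f j
          ≤ ((F'.filter (fun j => blk j = k)).card : ℝ) * E := by
            have := Finset.sum_le_card_nsmul _ _ E hterm
            rwa [nsmul_eq_mul] at this
        _ ≤ (C * q ^ (((min k ℓ : ℕ) : ℝ) - (k : ℝ))) * E :=
            mul_le_mul_of_nonneg_right hcard hE0
        _ = C ^ 2 * q ^ ((ℓ : ℝ) / 2) * t ^ (d k) := by
            rw [hE]
            have := exponent_identity q ε hq0 ℓ k
            calc (C * q ^ (((min k ℓ : ℕ) : ℝ) - (k : ℝ)))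
                  * (C * q ^ ((1 / 2 + ε) * |(ℓ : ℝ) - (k : ℝ)|) * q ^ ((k : ℝ) / 2))
                = C ^ 2 * (q ^ (((min k ℓ : ℕ) : ℝ) - (k : ℝ))
                    * (q ^ ((1 / 2 + ε) * |(ℓ : ℝ) - (k : ℝ)|) * q ^ ((k : ℝ) / 2))) := by ring
              _ = C ^ 2 * (q ^ ((ℓ : ℝ) / 2) * t ^ (d k)) := by rw [this]
              _ = C ^ 2 * q ^ ((ℓ : ℝ) / 2) * t ^ (d k) := by ring
    · rw [if_neg hdk, mul_zero]
      refine le_of_eq (Finset.sum_eq_zero fun j hj => ?_)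
      obtain ⟨hj1, hj2⟩ := Finset.mem_filter.mp hj
      have hjk : j ∈ B k := hj2 ▸ hblk j
      have habs : |(ℓ : ℤ) - (k : ℤ)| ≤ (r : ℤ) := by
        have h : ((ℓ : ℤ) - (k : ℤ)).natAbs ≤ r := Nat.not_lt.mp hdk
        rw [Int.abs_eq_natAbs]
        exact Int.ofNat_le.mpr h
      have := hvan ℓ k i j hi hjk habs
      exact absurd this (Finset.mem_filter.mp hj1).2
  have step3 : ∑ k ∈ F'.image blk, C ^ 2 * q ^ ((ℓ : ℝ) / 2) * (if r < d k then t ^ (d k) else 0)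
      ≤ C ^ 2 * q ^ ((ℓ : ℝ) / 2) * (2 * t ^ (r + 1) / (1 - t)) := by
    rw [← Finset.mul_sum]
    refine mul_le_mul_of_nonneg_left ?_
      (mul_nonneg (sq_nonneg C) (Real.rpow_pos_of_pos hq0 _).le)
    exact geo_abs_sum ht0.le ht1 _ ℓ r
  calc ∑ j ∈ F, f j = ∑ j ∈ F', f j := step0
    _ = ∑ k ∈ F'.image blk, ∑ j ∈ F'.filter (fun j => blk j = k), f j := step1
    _ ≤ ∑ k ∈ F'.image blk, C ^ 2 * q ^ ((ℓ : ℝ) / 2) * (if r < d k then t ^ (d k) else 0) :=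
        Finset.sum_le_sum step2
    _ ≤ C ^ 2 * q ^ ((ℓ : ℝ) / 2) * (2 * t ^ (r + 1) / (1 - t)) := step3
    _ = (2 * C ^ 2 * t ^ (r + 1) / (1 - t)) * q ^ ((ℓ : ℝ) / 2) := by ring

/-- geometric-decay lemma. A matrix whose entries decay like
`q^{(1/2+ε)|ℓ−k|}` across a partition `(B_ℓ)` of ℕ, with geometrically controlled
numbers of nonzero entries per row and column, and which vanishes on block pairs
with `|ℓ−k| ≤ r`, is a bounded operator with `‖M‖₂ ≤ C_geo q^{εr}`, where `C_geo`
depends only on `C`, `q`, and `ε`. -/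
theorem geometric_block_decay_bound
    (C q ε : ℝ) (hC : 0 < C) (hq0 : 0 < q) (hq1 : q < 1) (hε : 0 < ε) :
    ∃ Cgeo : ℝ, 0 < Cgeo ∧
      ∀ (B : ℕ → Set ℕ) (M : Mat) (r : ℕ),
        (Pairwise fun ℓ k => Disjoint (B ℓ) (B k)) →
        (⋃ ℓ, B ℓ) = Set.univ →
        (∀ ℓ k i j, i ∈ B ℓ → j ∈ B k →
          |M i j| ≤ C * q ^ ((1 / 2 + ε) * |(ℓ : ℝ) - (k : ℝ)|)) →
        (∀ ℓ k i, i ∈ B ℓ →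
          (B k ∩ {j | M i j ≠ 0}).Finite ∧
          ((B k ∩ {j | M i j ≠ 0}).ncard : ℝ) ≤ C * q ^ (((min k ℓ : ℕ) : ℝ) - (k : ℝ))) →
        (∀ ℓ k j, j ∈ B k →
          (B ℓ ∩ {i | M i j ≠ 0}).Finite ∧
          ((B ℓ ∩ {i | M i j ≠ 0}).ncard : ℝ) ≤ C * q ^ (((min k ℓ : ℕ) : ℝ) - (ℓ : ℝ))) →
        (∀ ℓ k i j, i ∈ B ℓ → j ∈ B k → |(ℓ : ℤ) - (k : ℤ)| ≤ (r : ℤ) → M i j = 0) →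
        BoundedWith M (Cgeo * q ^ (ε * (r : ℝ))) := by
  classical
  set t := q ^ ε with ht
  have ht0 : 0 < t := Real.rpow_pos_of_pos hq0 ε
  have ht1 : t < 1 := Real.rpow_lt_one hq0.le hq1 hε
  have h1t : 0 < 1 - t := by linarith
  refine ⟨2 * C ^ 2 * t / (1 - t), by positivity, ?_⟩
  intro B M r hdisj hU hdecay hrow hcol hvan
  have hex : ∀ n : ℕ, ∃ ℓ, n ∈ B ℓ := fun n =>
    Set.mem_iUnion.mp (hU ▸ Set.mem_univ n)
  choose blk hblk using hex
  set p : ℕ → ℝ := fun n => q ^ ((blk n : ℝ) / 2) with hp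
  have hp0 : ∀ n, 0 < p n := fun n => Real.rpow_pos_of_pos hq0 _
  set T := 2 * C ^ 2 * t ^ (r + 1) / (1 - t) with hT
  have hT0 : 0 < T := by positivity
  have hK : (2 * C ^ 2 * t / (1 - t)) * q ^ (ε * (r : ℝ)) = T := by
    have h1 : q ^ (ε * (r : ℝ)) = t ^ r := by
      rw [Real.rpow_mul hq0.le, Real.rpow_natCast]
    rw [h1, hT]
    ring
  rw [hK]
  -- row and column weighted bounds
  have hrowF : ∀ i (F : Finset ℕ), ∑ j ∈ F, |M i j| * p j ≤ T * p i := fun i F =>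
    row_bound C q ε hC hq0 hq1 hε B M r blk hblk hdecay hrow hvan i F
  have hrowS : ∀ i, Summable (fun j => |M i j| * p j) := fun i =>
    summable_of_sum_le (fun j => mul_nonneg (abs_nonneg _) (hp0 j).le) (hrowF i)
  have hrowT : ∀ i, ∑' j, |M i j| * p j ≤ T * p i := fun i =>
    Summable.tsum_le_of_sum_le (hrowS i) (hrowF i)
  have hcolF : ∀ j (F : Finset ℕ), ∑ i' ∈ F, |M i' j| * p i' ≤ T * p j := by
    intro j F
    exact row_bound C q ε hC hq0 hq1 hε B (fun a b => M b a) r blk hblk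
      (fun ℓ k i' j' hi' hj' => by
        have h := hdecay k ℓ j' i' hj' hi'
        rwa [abs_sub_comm ((k : ℝ)) ((ℓ : ℝ))] at h)
      (fun ℓ k i' hi' => by
        have h := hcol k ℓ i' hi'
        rwa [Nat.min_comm ℓ k] at h)
      (fun ℓ k i' j' hi' hj' habs =>
        hvan k ℓ j' i' hj' hi' (by rwa [abs_sub_comm] at habs))
      j F
  -- pointwise matrix bound
  have hMb : ∀ i j, |M i j| ≤ C * q ^ (-(blk i : ℝ) / 2) * p j := by
    intro i j
    refine (hdecay (blk i) (blk j) i j (hblk i) (hblk j)).trans ?_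
    have hmul : q ^ (-(blk i : ℝ) / 2) * q ^ ((blk j : ℝ) / 2)
        = q ^ (((blk j : ℝ) - (blk i : ℝ)) / 2) := by
      rw [← Real.rpow_add hq0]; ring_nf
    calc C * q ^ ((1 / 2 + ε) * |(blk i : ℝ) - (blk j : ℝ)|)
        ≤ C * q ^ (((blk j : ℝ) - (blk i : ℝ)) / 2) := by
          refine mul_le_mul_of_nonneg_left
            (Real.rpow_le_rpow_of_exponent_ge hq0 hq1.le ?_) hC.le
          have h1 : (blk j : ℝ) - (blk i : ℝ) ≤ |(blk i : ℝ) - (blk j : ℝ)| := by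
            rw [abs_sub_comm]; exact le_abs_self _
          have h2 : (0:ℝ) ≤ |(blk i : ℝ) - (blk j : ℝ)| := abs_nonneg _
          nlinarith
      _ = C * q ^ (-(blk i : ℝ) / 2) * p j := by rw [hp, ← hmul]; ring
  intro x hx
  -- summability of G i
  have hg : ∀ i, Summable (fun j => |M i j| * x j ^ 2 / p j) := by
    intro i
    refine Summable.of_nonneg_of_le
      (fun j => div_nonneg (mul_nonneg (abs_nonneg _) (sq_nonneg _)) (hp0 j).le)
      (fun j => ?_) (hx.mul_left (C * q ^ (-(blk i : ℝ) / 2)))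
    have h1 : |M i j| * x j ^ 2 ≤ (C * q ^ (-(blk i : ℝ) / 2) * p j) * x j ^ 2 :=
      mul_le_mul_of_nonneg_right (hMb i j) (sq_nonneg _)
    calc |M i j| * x j ^ 2 / p j
        ≤ (C * q ^ (-(blk i : ℝ) / 2) * p j) * x j ^ 2 / p j :=
          (div_le_div_iff_of_pos_right (hp0 j)).mpr h1
      _ = C * q ^ (-(blk i : ℝ) / 2) * x j ^ 2 := by
          have hpj := (hp0 j).ne'
          field_simp
  -- absolute summability of each row of M against x
  have habs_sum : ∀ i, Summable (fun j => |M i j * x j|) := by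
    intro i
    refine Summable.of_nonneg_of_le (fun j => abs_nonneg _) (fun j => ?_)
      (((hrowS i).add (hg i)).div_const 2)
    show |M i j * x j| ≤ (|M i j| * p j + |M i j| * x j ^ 2 / p j) / 2
    rw [abs_mul]
    set u := x j ^ 2 / p j with hu
    have hu0 : 0 ≤ u := div_nonneg (sq_nonneg _) (hp0 j).le
    have hup : u * p j = x j ^ 2 := div_mul_cancel₀ _ (hp0 j).ne'
    have h3 : 0 < 2 * |x j| + p j + u + 1 := by
      have := abs_nonneg (x j); have := hp0 j; linarith
    have h2 : 2 * |x j| ≤ p j + u := by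
      nlinarith [sq_nonneg (p j - u), hup, h3, abs_mul_abs_self (x j), hp0 j, hu0,
        abs_nonneg (x j)]
    have := mul_le_mul_of_nonneg_left h2 (abs_nonneg (M i j))
    calc |M i j| * |x j| = |M i j| * (2 * |x j|) / 2 := by ring
      _ ≤ |M i j| * (p j + u) / 2 := by linarith
      _ = (|M i j| * p j + |M i j| * u) / 2 := by ring
      _ = (|M i j| * p j + |M i j| * x j ^ 2 / p j) / 2 := by rw [hu]; ring
  -- Cauchy-Schwarz per row
  have hCS : ∀ i, (∑' j, |M i j| * |x j|) ^ 2
      ≤ (∑' j, |M i j| * p j) * (∑' j, |M i j| * x j ^ 2 / p j) := by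
    intro i
    set a : ℕ → ℝ := fun j => Real.sqrt (|M i j| * p j) with ha
    set b : ℕ → ℝ := fun j => Real.sqrt (|M i j| * x j ^ 2 / p j) with hb
    have ha2 : ∀ j, a j ^ 2 = |M i j| * p j := fun j =>
      Real.sq_sqrt (mul_nonneg (abs_nonneg _) (hp0 j).le)
    have hb2 : ∀ j, b j ^ 2 = |M i j| * x j ^ 2 / p j := fun j =>
      Real.sq_sqrt (div_nonneg (mul_nonneg (abs_nonneg _) (sq_nonneg _)) (hp0 j).le)
    have hab : ∀ j, a j * b j = |M i j| * |x j| := by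
      intro j
      rw [ha, hb]
      simp only []
      rw [← Real.sqrt_mul (mul_nonneg (abs_nonneg _) (hp0 j).le)]
      have harg : |M i j| * p j * (|M i j| * x j ^ 2 / p j) = (|M i j| * |x j|) ^ 2 := by
        have h4 : (|M i j| * |x j|) ^ 2 = |M i j| ^ 2 * x j ^ 2 := by
          rw [mul_pow, sq_abs, sq_abs]
        rw [h4]
        have hpj := (hp0 j).ne'
        field_simp
      rw [harg, Real.sqrt_sq (mul_nonneg (abs_nonneg _) (abs_nonneg _))]
    have hsa : Summable (fun j => a j ^ 2) := by
      refine (summable_congr fun j => (ha2 j)).mpr (hrowS i)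
    have hsb : Summable (fun j => b j ^ 2) := by
      refine (summable_congr fun j => (hb2 j)).mpr (hg i)
    have := (tsum_cs a b (fun j => Real.sqrt_nonneg _) (fun j => Real.sqrt_nonneg _) hsa hsb).2
    rwa [tsum_congr hab, tsum_congr ha2, tsum_congr hb2] at this
  -- per-row square bound
  have hGnn : ∀ i, 0 ≤ ∑' j, |M i j| * x j ^ 2 / p j := fun i =>
    tsum_nonneg fun j => div_nonneg (mul_nonneg (abs_nonneg _) (sq_nonneg _)) (hp0 j).le
  have hMx : ∀ i, (mulVec M x i) ^ 2 ≤ (T * p i) * ∑' j, |M i j| * x j ^ 2 / p j := by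
    intro i
    have h1 : |mulVec M x i| ≤ ∑' j, |M i j * x j| := by
      show |∑' j, M i j * x j| ≤ ∑' j, |M i j * x j|
      have hsn : Summable fun j => ‖M i j * x j‖ := by
        have he : (fun j => ‖M i j * x j‖) = fun j => |M i j * x j| :=
          funext fun j => Real.norm_eq_abs _
        rw [he]; exact habs_sum i
      calc |∑' j, M i j * x j| = ‖∑' j, M i j * x j‖ := (Real.norm_eq_abs _).symm
        _ ≤ ∑' j, ‖M i j * x j‖ := norm_tsum_le_tsum_norm hsn
        _ = ∑' j, |M i j * x j| := tsum_congr fun j => Real.norm_eq_abs _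
    have h2 : ∑' j, |M i j * x j| = ∑' j, |M i j| * |x j| :=
      tsum_congr fun j => abs_mul _ _
    have h3 : (mulVec M x i) ^ 2 ≤ (∑' j, |M i j| * |x j|) ^ 2 := by
      rw [← sq_abs (mulVec M x i)]
      refine pow_le_pow_left₀ (abs_nonneg _) ?_ 2
      rw [← h2]; exact h1
    refine h3.trans ((hCS i).trans ?_)
    exact mul_le_mul_of_nonneg_right (hrowT i) (hGnn i)
  -- finite sum bound
  have hfin : ∀ F : Finset ℕ, ∑ i' ∈ F, (mulVec M x i') ^ 2 ≤ T ^ 2 * ∑' j, x j ^ 2 := by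
    intro F
    have s1 : ∑ i' ∈ F, (mulVec M x i') ^ 2
        ≤ ∑ i' ∈ F, (T * p i') * ∑' j, |M i' j| * x j ^ 2 / p j :=
      Finset.sum_le_sum fun i' _ => hMx i'
    have s2 : ∑ i' ∈ F, (T * p i') * ∑' j, |M i' j| * x j ^ 2 / p j
        = T * ∑' j, ∑ i' ∈ F, p i' * (|M i' j| * x j ^ 2 / p j) := by
      rw [Summable.tsum_finsetSum (fun i' _ => (hg i').mul_left (p i')), Finset.mul_sum]
      refine Finset.sum_congr rfl fun i' _ => ?_
      rw [← tsum_mul_left, ← tsum_mul_left]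
      exact tsum_congr fun j => by ring
    have s3 : ∀ j, ∑ i' ∈ F, p i' * (|M i' j| * x j ^ 2 / p j) ≤ T * x j ^ 2 := by
      intro j
      have e1 : ∑ i' ∈ F, p i' * (|M i' j| * x j ^ 2 / p j)
          = (∑ i' ∈ F, |M i' j| * p i') * (x j ^ 2 / p j) := by
        rw [Finset.sum_mul]
        exact Finset.sum_congr rfl fun i' _ => by ring
      rw [e1]
      calc (∑ i' ∈ F, |M i' j| * p i') * (x j ^ 2 / p j)
          ≤ (T * p j) * (x j ^ 2 / p j) :=
            mul_le_mul_of_nonneg_right (hcolF j F)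
              (div_nonneg (sq_nonneg _) (hp0 j).le)
        _ = T * x j ^ 2 := by have hpj := (hp0 j).ne'; field_simp
    have s4 : ∑' j, (∑ i' ∈ F, p i' * (|M i' j| * x j ^ 2 / p j)) ≤ ∑' j, T * x j ^ 2 :=
      Summable.tsum_le_tsum s3 (summable_sum fun i' _ => (hg i').mul_left (p i')) (hx.mul_left T)
    calc ∑ i' ∈ F, (mulVec M x i') ^ 2
        ≤ T * ∑' j, ∑ i' ∈ F, p i' * (|M i' j| * x j ^ 2 / p j) := by rw [← s2]; exact s1
      _ ≤ T * ∑' j, T * x j ^ 2 := mul_le_mul_of_nonneg_left s4 hT0.le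
      _ = T ^ 2 * ∑' j, x j ^ 2 := by rw [tsum_mul_left]; ring
  have hMem : Memℓ2 (mulVec M x) :=
    summable_of_sum_le (fun i => sq_nonneg _) hfin
  refine ⟨habs_sum, hMem, ?_⟩
  have htsle : ∑' i, (mulVec M x i) ^ 2 ≤ T ^ 2 * ∑' j, x j ^ 2 :=
    Summable.tsum_le_of_sum_le hMem hfin
  show Real.sqrt (∑' i, (mulVec M x i) ^ 2) ≤ T * Real.sqrt (∑' i, x i ^ 2)
  calc Real.sqrt (∑' i, (mulVec M x i) ^ 2)
      ≤ Real.sqrt (T ^ 2 * ∑' j, x j ^ 2) := Real.sqrt_le_sqrt htsle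
    _ = T * Real.sqrt (∑' j, x j ^ 2) := by
        rw [Real.sqrt_mul (sq_nonneg T), Real.sqrt_sq hT0.le]
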